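/- arXiv:1310.7402 — 5 statements merged into one kernel-verified Lean document; each statement's English description precedes it below -/
import Mathlib

section
/- Let (u_n)_{n≥1} be a bounded sequence satisfying u_n = a_n u_{n+1} + b_n with a_n ≥ 0, limsup a_n < 1, b_n > 0, sup_{k,n≥1} b_{n+k}/b_n < ∞, and a_n → 0 as n → ∞. Then u_n / b_n → 1 as n → ∞. -/
open Filter

theorem affine_recursion_equiv
    (u a b : ℕ → ℝ)
    (hbdd : ∃ M : ℝ, ∀ n ≥ 1, |u n| ≤ M)
    (hrec : ∀ n ≥ 1, u n = a n * u (n + 1) + b n)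
    (ha_nonneg : ∀ n ≥ 1, 0 ≤ a n)
    (ha_limsup : limsup (fun n => a n) atTop < 1)
    (hb_pos : ∀ n ≥ 1, 0 < b n)
    (hb_ratio : ∃ K : ℝ, ∀ n ≥ 1, ∀ k ≥ 1, b (n + k) / b n ≤ K)
    (ha_lim : Tendsto a atTop (nhds 0)) :
    Tendsto (fun n => u n / b n) atTop (nhds 1) := by
  obtain ⟨M, hM⟩ := hbdd
  obtain ⟨K, hK⟩ := hb_ratio
  set K' := max K 1 with hK'def
  have hK'1 : (1:ℝ) ≤ K' := le_max_right _ _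
  have hMnn : 0 ≤ M := le_trans (abs_nonneg _) (hM 1 le_rfl)
  rw [Metric.tendsto_atTop]
  intro ε hε
  set δ := min (1/2 : ℝ) (ε / (2*K'+1)) with hδdef
  have hδpos : 0 < δ := lt_min (by norm_num) (div_pos hε (by linarith))
  have hδhalf : δ ≤ 1/2 := min_le_left _ _
  have hδlt1 : δ < 1 := lt_of_le_of_lt hδhalf (by norm_num)
  have h2Kδ : 2*K'*δ < ε := by
    have h1 : δ ≤ ε / (2*K'+1) := min_le_right _ _
    rw [le_div_iff₀ (by linarith : (0:ℝ) < 2*K'+1)] at h1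
    nlinarith [hδpos]
  obtain ⟨N₀, hN₀⟩ := Metric.tendsto_atTop.mp ha_lim δ hδpos
  refine ⟨max N₀ 1, fun n hn => ?_⟩
  have hn1 : 1 ≤ n := le_trans (le_max_right _ _) hn
  have hnN : N₀ ≤ n := le_trans (le_max_left _ _) hn
  have hbn := hb_pos n hn1
  have ha_small : ∀ i, a (n+i) ≤ δ := by
    intro i
    have := hN₀ (n+i) (le_trans hnN (Nat.le_add_right _ _))
    rw [Real.dist_eq, sub_zero] at this
    exact le_of_lt (lt_of_le_of_lt (le_abs_self _) this)
  have ha_nn : ∀ i, 0 ≤ a (n+i) := fun i => ha_nonneg _ (le_trans hn1 (Nat.le_add_right _ _))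
  set P : ℕ → ℝ := fun m => ∏ i ∈ Finset.range m, a (n+i) with hPdef
  set S : ℕ → ℝ := fun m => ∑ j ∈ Finset.range m, P j * b (n+j) with hSdef
  have hP_nn : ∀ m, 0 ≤ P m := fun m => Finset.prod_nonneg fun i _ => ha_nn i
  have hP_le : ∀ m, P m ≤ δ^m := by
    intro m
    calc P m ≤ ∏ _i ∈ Finset.range m, δ :=
          Finset.prod_le_prod (fun i _ => ha_nn i) (fun i _ => ha_small i)
      _ = δ^m := by simp
  have hb_le : ∀ j, b (n+j) ≤ K' * b n := by
    intro j
    cases j with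
    | zero => simpa using le_mul_of_one_le_left (le_of_lt hbn) hK'1
    | succ j =>
      have h1 := hK n hn1 (j+1) (Nat.succ_le_succ (Nat.zero_le _))
      rw [div_le_iff₀ hbn] at h1
      calc b (n+(j+1)) ≤ K * b n := h1
        _ ≤ K' * b n := mul_le_mul_of_nonneg_right (le_max_left _ _) (le_of_lt hbn)
  have hb_nn : ∀ j, 0 ≤ b (n+j) := fun j =>
    le_of_lt (hb_pos _ (le_trans hn1 (Nat.le_add_right _ _)))
  have hA : ∀ m, u n = S m + P m * u (n+m) := by
    intro m
    induction m with
    | zero => simp [hSdef, hPdef]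
    | succ m ih =>
      have hrecm := hrec (n+m) (le_trans hn1 (Nat.le_add_right _ _))
      rw [ih, hrecm]
      have e1 : S (m+1) = S m + P m * b (n+m) := by
        simp [hSdef, Finset.sum_range_succ]
      have e2 : P (m+1) = P m * a (n+m) := by
        simp [hPdef, Finset.prod_range_succ]
      have e3 : u (n + (m+1)) = u (n + m + 1) := by ring_nf
      rw [e1, e2, e3]
      ring
  -- upper bound on S m
  have hS_up : ∀ m, S m ≤ b n + 2*δ*K'*b n := by
    intro m
    cases m with
    | zero =>
      simp only [hSdef, Finset.range_zero, Finset.sum_empty]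
      nlinarith [mul_pos hδpos hbn, hK'1, hbn]
    | succ m =>
      have e : S (m+1) = P 0 * b (n+0) + ∑ i ∈ Finset.range m, P (i+1) * b (n+(i+1)) := by
        simp only [hSdef]
        rw [Finset.sum_range_succ']
        ring
      have hterm : ∀ i ∈ Finset.range m, P (i+1) * b (n+(i+1)) ≤ δ^(i+1) * (K'*b n) := by
        intro i _
        exact mul_le_mul (hP_le (i+1)) (hb_le (i+1)) (hb_nn (i+1)) (pow_nonneg (le_of_lt hδpos) _)
      have hsum : ∑ i ∈ Finset.range m, P (i+1) * b (n+(i+1))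
          ≤ ∑ i ∈ Finset.range m, δ^(i+1) * (K'*b n) := Finset.sum_le_sum hterm
      have hgeom : ∑ i ∈ Finset.range m, δ^(i+1) * (K'*b n)
          = (∑ i ∈ Finset.range m, δ^i) * (δ * (K'*b n)) := by
        rw [Finset.sum_mul]
        congr 1
        funext i
        ring
      have hgs : ∑ i ∈ Finset.range m, δ^i ≤ 2 := by
        have h1 : ∑ i ∈ Finset.range m, δ^i = (1 - δ^m) / (1 - δ) := by
          rw [geom_sum_eq (ne_of_lt hδlt1)]
          rw [div_eq_div_iff (by linarith) (by linarith)]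
          ring
        rw [h1]
        rw [div_le_iff₀ (by linarith)]
        have : 0 ≤ δ^m := pow_nonneg (le_of_lt hδpos) _
        nlinarith
      have e0 : P 0 * b (n+0) = b n := by simp [hPdef]
      have hKbn : 0 ≤ δ * (K' * b n) := by positivity
      calc S (m+1) = b n + ∑ i ∈ Finset.range m, P (i+1) * b (n+(i+1)) := by rw [e, e0]
        _ ≤ b n + (∑ i ∈ Finset.range m, δ^i) * (δ * (K'*b n)) := by
            rw [← hgeom]; linarith
        _ ≤ b n + 2 * (δ * (K'*b n)) := by
            have := mul_le_mul_of_nonneg_right hgs hKbn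
            linarith
        _ = b n + 2*δ*K'*b n := by ring
  -- lower bound on S m for m ≥ 1
  have hS_low : ∀ m, b n ≤ S (m+1) := by
    intro m
    have h0 : (0:ℕ) ∈ Finset.range (m+1) := Finset.mem_range.mpr (Nat.succ_pos m)
    have := Finset.single_le_sum (f := fun j => P j * b (n+j))
      (fun j _ => mul_nonneg (hP_nn j) (hb_nn j)) h0
    simpa [hPdef, hSdef] using this
  -- tail bound
  have htail : ∀ m, |P m * u (n+m)| ≤ δ^m * M := by
    intro m
    rw [abs_mul, abs_of_nonneg (hP_nn m)]
    exact mul_le_mul (hP_le m) (hM _ (le_trans hn1 (Nat.le_add_right _ _)))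
      (abs_nonneg _) (pow_nonneg (le_of_lt hδpos) _)
  have hub : ∀ m : ℕ, u n ≤ b n + 2*δ*K'*b n + δ^m * M := by
    intro m
    have h1 := hA m
    have h2 := htail m
    have h3 := hS_up m
    have := abs_le.mp h2
    linarith [this.2]
  have hlb : ∀ m : ℕ, b n - δ^(m+1) * M ≤ u n := by
    intro m
    have h1 := hA (m+1)
    have h2 := htail (m+1)
    have h3 := hS_low m
    have := abs_le.mp h2
    linarith [this.1]
  have hpow : Tendsto (fun m : ℕ => δ^m * M) atTop (nhds 0) := by
    have h1 : Tendsto (fun m : ℕ => δ^m) atTop (nhds 0) :=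
      tendsto_pow_atTop_nhds_zero_of_lt_one (le_of_lt hδpos) hδlt1
    simpa using h1.mul_const M
  have hun_up : u n ≤ b n + 2*δ*K'*b n := by
    have h1 : Tendsto (fun m : ℕ => b n + 2*δ*K'*b n + δ^m * M) atTop
        (nhds (b n + 2*δ*K'*b n)) := by
      have := (tendsto_const_nhds (x := b n + 2*δ*K'*b n) (f := atTop (α := ℕ))).add hpow
      simpa using this
    exact ge_of_tendsto' h1 hub
  have hun_low : b n ≤ u n := by
    have hpow' : Tendsto (fun m : ℕ => δ^(m+1) * M) atTop (nhds 0) :=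
      hpow.comp (tendsto_add_atTop_nat 1)
    have h1 : Tendsto (fun m : ℕ => b n - δ^(m+1) * M) atTop (nhds (b n)) := by
      have := (tendsto_const_nhds (x := b n) (f := atTop (α := ℕ))).sub hpow'
      simpa using this
    exact le_of_tendsto' h1 hlb
  have hdiv1 : (1:ℝ) ≤ u n / b n := (one_le_div hbn).mpr hun_low
  rw [Real.dist_eq, abs_of_nonneg (by linarith)]
  have : u n / b n ≤ 1 + 2*δ*K' := by
    rw [div_le_iff₀ hbn]
    nlinarith
  nlinarith
end

section
/- Let (λ_n)_{n≥1} and (μ_n)_{n≥1} be positive sequences with λ_n/μ_n → l < 1 as n → ∞ and sup_{k,n≥1} μ_n/μ_{n+k} < ∞. Define π_n = (λ_1···λ_{n-1})/(μ_1···μ_n). Then the series ∑_{n≥1} (1/(λ_n π_n)) ∑_{i≥n+1} π_i converges if and only if ∑_{n≥1} 1/μ_n converges. -/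
open Filter

theorem series_S_convergence_iff_inverse_mu_summable
    (lam mu : ℕ → ℝ) (l : ℝ) (pi : ℕ → ℝ)
    (hlam_pos : ∀ n ≥ 1, 0 < lam n)
    (hmu_pos : ∀ n ≥ 1, 0 < mu n)
    (hlim : Tendsto (fun n => lam n / mu n) atTop (nhds l))
    (hl : l < 1)
    (hgrowth : ∃ K : ℝ, ∀ n ≥ 1, ∀ k ≥ 1, mu n / mu (n + k) ≤ K)
    (hpi : ∀ n ≥ 1, pi n = (∏ i ∈ Finset.Ico 1 n, lam i) / ∏ i ∈ Finset.Icc 1 n, mu i) :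
    Summable (fun n : ℕ =>
        (1 / (lam (n + 1) * pi (n + 1))) * ∑' i : ℕ, pi (n + 2 + i)) ↔
      Summable (fun n : ℕ => 1 / mu (n + 1)) := by
  -- l is nonnegative
  have hl0 : 0 ≤ l := ge_of_tendsto hlim (eventually_atTop.2 ⟨1, fun n hn =>
    div_nonneg (hlam_pos n hn).le (hmu_pos n hn).le⟩)
  set r : ℝ := (l + 1) / 2 with hr_def
  have hlr : l < r := by rw [hr_def]; linarith
  have hr1 : r < 1 := by rw [hr_def]; linarith
  have hr0 : 0 < r := by rw [hr_def]; linarith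
  -- N such that lam n ≤ r * mu n for n ≥ N
  obtain ⟨N0, hN0⟩ := eventually_atTop.1 (hlim.eventually (gt_mem_nhds hlr))
  set N : ℕ := N0 + 1 with hN_def
  have hN1 : 1 ≤ N := Nat.le_add_left 1 N0
  have hlamr : ∀ n, N ≤ n → lam n ≤ r * mu n := by
    intro n hn
    have h1 : 1 ≤ n := le_trans hN1 hn
    have := hN0 n (le_trans (Nat.le_succ N0) hn)
    exact le_of_lt ((div_lt_iff₀ (hmu_pos n h1)).1 this)
  -- the growth constant
  obtain ⟨K, hK⟩ := hgrowth
  set K' : ℝ := max K 1 with hK'_def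
  have hK1 : (1 : ℝ) ≤ K' := le_max_right K 1
  have hKratio : ∀ n, 1 ≤ n → ∀ i : ℕ, mu n / mu (n + i) ≤ K' := by
    intro n hn i
    cases i with
    | zero => simp [div_self (ne_of_gt (hmu_pos n hn))]; exact hK1
    | succ i =>
        exact le_trans (hK n hn (i + 1) (Nat.succ_le_succ (Nat.zero_le i))) (le_max_left K 1)
  -- positivity of pi
  have hpipos : ∀ n, 1 ≤ n → 0 < pi n := by
    intro n hn
    rw [hpi n hn]
    apply div_pos
    · apply Finset.prod_pos
      intro i hi
      exact hlam_pos i (Finset.mem_Ico.1 hi).1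
    · apply Finset.prod_pos
      intro i hi
      exact hmu_pos i (Finset.mem_Icc.1 hi).1
  -- the recurrence pi (n+1) = pi n * lam n / mu (n+1)
  have hrec : ∀ n, 1 ≤ n → pi (n + 1) = pi n * lam n / mu (n + 1) := by
    intro n hn
    rw [hpi (n + 1) (by omega), hpi n hn]
    have hL : ∏ i ∈ Finset.Ico 1 (n + 1), lam i
        = (∏ i ∈ Finset.Ico 1 n, lam i) * lam n := Finset.prod_Ico_succ_top hn lam
    have hM : ∏ i ∈ Finset.Icc 1 (n + 1), mu i
        = (∏ i ∈ Finset.Icc 1 n, mu i) * mu (n + 1) := by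
      rw [← Finset.Ico_add_one_right_eq_Icc, ← Finset.Ico_add_one_right_eq_Icc,
        Finset.prod_Ico_succ_top (by omega : 1 ≤ n + 1) mu]
    have hQ : (0 : ℝ) < ∏ i ∈ Finset.Icc 1 n, mu i :=
      Finset.prod_pos fun i hi => hmu_pos i (Finset.mem_Icc.1 hi).1
    have hmun : (0 : ℝ) < mu (n + 1) := hmu_pos (n + 1) (by omega)
    rw [hL, hM]
    field_simp
  -- geometric decay of pi
  have hgeo : ∀ n, N ≤ n → ∀ i : ℕ,
      pi (n + 1 + i) ≤ pi (n + 1) * r ^ i * (mu (n + 1) / mu (n + 1 + i)) := by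
    intro n hn i
    induction i with
    | zero =>
        simp [div_self (ne_of_gt (hmu_pos (n + 1) (by omega)))]
    | succ i ih =>
        have h1 : 1 ≤ n + 1 + i := by omega
        have hmu1 : 0 < mu (n + 1 + i) := hmu_pos _ h1
        have hmu2 : 0 < mu (n + 1 + i + 1) := hmu_pos _ (by omega)
        have hpieq : pi (n + 1 + (i + 1)) = pi (n + 1 + i) * lam (n + 1 + i) / mu (n + 1 + i + 1) := by
          exact hrec (n + 1 + i) h1
        have hlam' : lam (n + 1 + i) ≤ r * mu (n + 1 + i) := hlamr (n + 1 + i) (by omega)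
        have hlamnn : 0 ≤ lam (n + 1 + i) := (hlam_pos _ h1).le
        have hpinn : 0 ≤ pi (n + 1 + i) := (hpipos _ h1).le
        have hrhsnn : 0 ≤ pi (n + 1) * r ^ i * (mu (n + 1) / mu (n + 1 + i)) :=
          mul_nonneg (mul_nonneg (hpipos (n + 1) (by omega)).le (pow_nonneg hr0.le i))
            (div_nonneg (hmu_pos (n + 1) (by omega)).le hmu1.le)
        have h2 : pi (n + 1 + i) * lam (n + 1 + i)
            ≤ (pi (n + 1) * r ^ i * (mu (n + 1) / mu (n + 1 + i))) * (r * mu (n + 1 + i)) :=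
          mul_le_mul ih hlam' hlamnn hrhsnn
        have h3 : (pi (n + 1) * r ^ i * (mu (n + 1) / mu (n + 1 + i))) * (r * mu (n + 1 + i))
            = pi (n + 1) * r ^ (i + 1) * mu (n + 1) := by
          field_simp
          ring
        rw [hpieq]
        rw [div_le_iff₀ hmu2]
        calc pi (n + 1 + i) * lam (n + 1 + i)
            ≤ pi (n + 1) * r ^ (i + 1) * mu (n + 1) := by rw [← h3]; exact h2
          _ = pi (n + 1) * r ^ (i + 1) * (mu (n + 1) / mu (n + 1 + (i + 1))) * mu (n + 1 + i + 1) := by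
              have : (n : ℕ) + 1 + (i + 1) = n + 1 + i + 1 := by omega
              rw [this]
              field_simp
  have hgeoK : ∀ n, N ≤ n → ∀ i : ℕ, pi (n + 1 + i) ≤ pi (n + 1) * K' * r ^ i := by
    intro n hn i
    refine le_trans (hgeo n hn i) ?_
    have h1 : pi (n + 1) * r ^ i * (mu (n + 1) / mu (n + 1 + i))
        ≤ pi (n + 1) * r ^ i * K' :=
      mul_le_mul_of_nonneg_left (hKratio (n + 1) (by omega) i)
        (mul_nonneg (hpipos (n + 1) (by omega)).le (pow_nonneg hr0.le i))
    calc pi (n + 1) * r ^ i * (mu (n + 1) / mu (n + 1 + i))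
        ≤ pi (n + 1) * r ^ i * K' := h1
      _ = pi (n + 1) * K' * r ^ i := by ring
  -- pi is summable
  have hSpi : Summable pi := by
    rw [← summable_nat_add_iff (N + 1)]
    apply Summable.of_nonneg_of_le
      (fun m => (hpipos (m + (N + 1)) (by omega)).le)
      (fun m => ?_)
      ((summable_geometric_of_lt_one hr0.le hr1).mul_left (pi (N + 1) * K'))
    have := hgeoK N le_rfl m
    calc pi (m + (N + 1)) = pi (N + 1 + m) := by rw [add_comm]
      _ ≤ pi (N + 1) * K' * r ^ m := this
  have htail : ∀ m : ℕ, Summable (fun i => pi (m + i)) := fun m =>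
    ((summable_nat_add_iff m).mpr hSpi).congr (fun i => by rw [add_comm])
  -- lower bound for the terms
  have hterm_lb : ∀ n : ℕ, 1 / mu (n + 2)
      ≤ (1 / (lam (n + 1) * pi (n + 1))) * ∑' i : ℕ, pi (n + 2 + i) := by
    intro n
    have hlp : 0 < lam (n + 1) * pi (n + 1) :=
      mul_pos (hlam_pos (n + 1) (by omega)) (hpipos (n + 1) (by omega))
    have h0 : pi (n + 2) ≤ ∑' i : ℕ, pi (n + 2 + i) := by
      have := Summable.le_tsum (htail (n + 2)) 0 (fun j _ => (hpipos (n + 2 + j) (by omega)).le)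
      simpa using this
    have heq : 1 / mu (n + 2) = (1 / (lam (n + 1) * pi (n + 1))) * pi (n + 2) := by
      rw [hrec (n + 1) (by omega)]
      have hmun : (0 : ℝ) < mu (n + 2) := hmu_pos (n + 2) (by omega)
      have hlne : lam (n + 1) ≠ 0 := (hlam_pos (n + 1) (by omega)).ne'
      have hpne : pi (n + 1) ≠ 0 := (hpipos (n + 1) (by omega)).ne'
      field_simp
    rw [heq]
    exact mul_le_mul_of_nonneg_left h0 (by positivity)
  -- upper bound for the terms (for n + 1 ≥ N)
  have hterm_ub : ∀ n : ℕ, N ≤ n + 1 →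
      (1 / (lam (n + 1) * pi (n + 1))) * ∑' i : ℕ, pi (n + 2 + i)
        ≤ (K' * (1 - r)⁻¹) * (1 / mu (n + 2)) := by
    intro n hn
    have hlp : 0 < lam (n + 1) * pi (n + 1) :=
      mul_pos (hlam_pos (n + 1) (by omega)) (hpipos (n + 1) (by omega))
    have hpin2 : 0 < pi (n + 2) := hpipos (n + 2) (by omega)
    have hts : ∑' i : ℕ, pi (n + 2 + i) ≤ pi (n + 2) * K' * (1 - r)⁻¹ := by
      have hbd : ∀ i : ℕ, pi (n + 2 + i) ≤ pi (n + 2) * K' * r ^ i := by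
        intro i
        have := hgeoK (n + 1) hn i
        simpa [show n + 1 + 1 = n + 2 from rfl] using this
      calc ∑' i : ℕ, pi (n + 2 + i)
          ≤ ∑' i : ℕ, pi (n + 2) * K' * r ^ i :=
            Summable.tsum_le_tsum hbd (htail (n + 2))
              ((summable_geometric_of_lt_one hr0.le hr1).mul_left _)
        _ = pi (n + 2) * K' * (1 - r)⁻¹ := by
            rw [tsum_mul_left, tsum_geometric_of_lt_one hr0.le hr1]
    have heq : 1 / mu (n + 2) = (1 / (lam (n + 1) * pi (n + 1))) * pi (n + 2) := by
      rw [hrec (n + 1) (by omega)]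
      have hmun : (0 : ℝ) < mu (n + 2) := hmu_pos (n + 2) (by omega)
      have hlne : lam (n + 1) ≠ 0 := (hlam_pos (n + 1) (by omega)).ne'
      have hpne : pi (n + 1) ≠ 0 := (hpipos (n + 1) (by omega)).ne'
      field_simp
    calc (1 / (lam (n + 1) * pi (n + 1))) * ∑' i : ℕ, pi (n + 2 + i)
        ≤ (1 / (lam (n + 1) * pi (n + 1))) * (pi (n + 2) * K' * (1 - r)⁻¹) :=
          mul_le_mul_of_nonneg_left hts (by positivity)
      _ = ((1 / (lam (n + 1) * pi (n + 1))) * pi (n + 2)) * (K' * (1 - r)⁻¹) := by ring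
      _ = (K' * (1 - r)⁻¹) * (1 / mu (n + 2)) := by rw [heq]; ring
  -- terms are nonnegative
  have hterm_nn : ∀ n : ℕ,
      0 ≤ (1 / (lam (n + 1) * pi (n + 1))) * ∑' i : ℕ, pi (n + 2 + i) := by
    intro n
    have hlp : 0 < lam (n + 1) * pi (n + 1) :=
      mul_pos (hlam_pos (n + 1) (by omega)) (hpipos (n + 1) (by omega))
    exact mul_nonneg (by positivity) (tsum_nonneg fun i => (hpipos _ (by omega)).le)
  -- the shift equivalence for 1/mu
  have hshift : Summable (fun n : ℕ => 1 / mu (n + 2)) ↔ Summable (fun n : ℕ => 1 / mu (n + 1)) := by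
    have := summable_nat_add_iff (f := fun n : ℕ => 1 / mu (n + 1)) 1
    constructor
    · intro h
      exact this.mp (h.congr fun n => by ring_nf)
    · intro h
      exact (this.mpr h).congr fun n => by ring_nf
  constructor
  · intro h
    refine hshift.mp ?_
    exact Summable.of_nonneg_of_le
      (fun n => one_div_nonneg.2 (hmu_pos (n + 2) (by omega)).le) hterm_lb h
  · intro h
    have h2 : Summable (fun n : ℕ => 1 / mu (n + 2)) := hshift.mpr h
    have h3 : Summable (fun n : ℕ => (K' * (1 - r)⁻¹) * (1 / mu (n + 2))) := h2.mul_left _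
    have h4 : Summable (fun n : ℕ => (K' * (1 - r)⁻¹) * (1 / mu (n + N + 2))) :=
      ((summable_nat_add_iff N).mpr h3).congr (fun n => rfl)
    have hsh : Summable (fun n : ℕ =>
        (1 / (lam (n + N + 1) * pi (n + N + 1))) * ∑' i : ℕ, pi (n + N + 2 + i)) :=
      Summable.of_nonneg_of_le (fun n => hterm_nn (n + N))
        (fun n => hterm_ub (n + N) (by omega)) h4
    exact (summable_nat_add_iff N).mp (hsh.congr (fun n => rfl))
end

section
/- Let (λ_n), (μ_n) be positive sequences with λ_n/μ_n → l < 1 and sup_{k,n≥1} μ_n/μ_{n+k} < ∞, and define A_n = ∑_{j≥1} (λ_{n+1}···λ_{n+j-1})/(μ_{n+1}···μ_{n+j}). Then there exist constants 0 < c ≤ C and N such that for all n ≥ N, c/μ_{n+1} ≤ A_n ≤ C/μ_{n+1}. -/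
open Filter

theorem A_n_comparable_to_inverse_mu
    (lam mu : ℕ → ℝ) (l : ℝ)
    (hlam_pos : ∀ n ≥ 1, 0 < lam n)
    (hmu_pos : ∀ n ≥ 1, 0 < mu n)
    (hlim : Tendsto (fun n => lam n / mu n) atTop (nhds l))
    (hl : l < 1)
    (hgrowth : ∃ K : ℝ, ∀ n ≥ 1, ∀ k ≥ 1, mu n / mu (n + k) ≤ K) :
    ∃ c C : ℝ, 0 < c ∧ c ≤ C ∧ ∃ N : ℕ, ∀ n ≥ N,
      c / mu (n + 1) ≤
        (∑' j : ℕ, (∏ i ∈ Finset.range j, lam (n + 1 + i) / mu (n + 1 + i)) *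
            (1 / mu (n + 1 + j))) ∧
      (∑' j : ℕ, (∏ i ∈ Finset.range j, lam (n + 1 + i) / mu (n + 1 + i)) *
          (1 / mu (n + 1 + j))) ≤ C / mu (n + 1) := by
  obtain ⟨K, hK⟩ := hgrowth
  set K' : ℝ := max K 1 with hK'def
  have hK'1 : (1 : ℝ) ≤ K' := le_max_right _ _
  -- l ≥ 0
  have hl0 : 0 ≤ l := by
    refine ge_of_tendsto hlim ?_
    filter_upwards [eventually_ge_atTop 1] with n hn
    exact div_nonneg (hlam_pos n hn).le (hmu_pos n hn).le
  set r : ℝ := (1 + l) / 2 with hrdef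
  have hr0 : 0 < r := by positivity
  have hr1 : r < 1 := by simp only [hrdef]; linarith
  have hlr : l < r := by simp only [hrdef]; linarith
  -- eventually ratio < r
  have hev : ∀ᶠ n in atTop, lam n / mu n < r := hlim.eventually_lt_const hlr
  obtain ⟨N0, hN0⟩ := eventually_atTop.1 hev
  set C : ℝ := (1 - r)⁻¹ * K' with hCdef
  have hC1 : (1 : ℝ) ≤ C := by
    have h1 : (1 : ℝ) ≤ (1 - r)⁻¹ := by
      rw [le_inv_comm₀ one_pos (by linarith)]
      linarith
    calc (1 : ℝ) = 1 * 1 := by ring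
    _ ≤ (1 - r)⁻¹ * K' := by
        apply mul_le_mul h1 hK'1 one_pos.le (by linarith)
  refine ⟨1, C, one_pos, hC1, N0, fun n hn => ?_⟩
  set f : ℕ → ℝ := fun j =>
    (∏ i ∈ Finset.range j, lam (n + 1 + i) / mu (n + 1 + i)) * (1 / mu (n + 1 + j)) with hf
  have hmu1 : 0 < mu (n + 1) := hmu_pos _ (by omega)
  have hfnonneg : ∀ j, 0 ≤ f j := by
    intro j
    apply mul_nonneg
    · exact Finset.prod_nonneg fun i _ =>
        div_nonneg (hlam_pos _ (by omega)).le (hmu_pos _ (by omega)).le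
    · exact div_nonneg one_pos.le (hmu_pos _ (by omega)).le
  have hfle : ∀ j, f j ≤ r ^ j * (K' / mu (n + 1)) := by
    intro j
    have hprod : (∏ i ∈ Finset.range j, lam (n + 1 + i) / mu (n + 1 + i)) ≤ r ^ j := by
      calc (∏ i ∈ Finset.range j, lam (n + 1 + i) / mu (n + 1 + i))
          ≤ ∏ _i ∈ Finset.range j, r := by
            apply Finset.prod_le_prod
            · intro i _
              exact div_nonneg (hlam_pos _ (by omega)).le (hmu_pos _ (by omega)).le
            · intro i _
              exact (hN0 _ (by omega)).le
        _ = r ^ j := by simp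
    have htail : 1 / mu (n + 1 + j) ≤ K' / mu (n + 1) := by
      have hmuj : 0 < mu (n + 1 + j) := hmu_pos _ (by omega)
      rw [div_le_div_iff₀ hmuj hmu1, one_mul]
      rcases Nat.eq_zero_or_pos j with hj | hj
      · subst hj
        simpa using le_mul_of_one_le_left hmuj.le hK'1
      · have := hK (n + 1) (by omega) j hj
        have h2 : mu (n + 1) ≤ K * mu (n + 1 + j) := by
          rwa [div_le_iff₀ hmuj] at this
        calc mu (n + 1) ≤ K * mu (n + 1 + j) := h2
          _ ≤ K' * mu (n + 1 + j) := by
              apply mul_le_mul_of_nonneg_right (le_max_left _ _) hmuj.le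
    calc f j ≤ r ^ j * (1 / mu (n + 1 + j)) := by
          apply mul_le_mul_of_nonneg_right hprod
            (div_nonneg one_pos.le (hmu_pos _ (by omega)).le)
      _ ≤ r ^ j * (K' / mu (n + 1)) := by
          apply mul_le_mul_of_nonneg_left htail (pow_nonneg hr0.le j)
  have hgsum : Summable fun j : ℕ => r ^ j * (K' / mu (n + 1)) :=
    (summable_geometric_of_lt_one hr0.le hr1).mul_right _
  have hsum : Summable f := Summable.of_nonneg_of_le hfnonneg hfle hgsum
  constructor
  · have h0 : f 0 ≤ ∑' j, f j := Summable.le_tsum hsum 0 fun j _ => hfnonneg j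
    have : f 0 = 1 / mu (n + 1) := by simp [hf]
    rw [one_div] at this ⊢
    rw [← this]
    exact h0
  · calc (∑' j, f j) ≤ ∑' j, r ^ j * (K' / mu (n + 1)) := Summable.tsum_le_tsum hfle hsum hgsum
      _ = (1 - r)⁻¹ * (K' / mu (n + 1)) := by
          rw [tsum_mul_right, tsum_geometric_of_lt_one hr0.le hr1]
      _ = C / mu (n + 1) := by rw [hCdef]; ring
end

section
/- Let (m_n) be a positive sequence with ∑_n m_n < ∞, set S_n = ∑_{k≥n} m_k, and suppose m_n/S_n → 0 as n → ∞. Then for every A > 0 there exists n_0 such that for all n ≥ n_0, S_n² ≥ 2A ∑_{k≥n} m_k². -/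
open Filter

theorem tail_sum_square_bound
    (m : ℕ → ℝ) (hm_pos : ∀ n, 0 < m n) (hm_sum : Summable m)
    (hratio : Tendsto (fun n => m n / ∑' k : ℕ, m (n + k)) atTop (nhds 0)) :
    ∀ A > (0:ℝ), ∃ n₀ : ℕ, ∀ n ≥ n₀,
      2 * A * ∑' k : ℕ, (m (n + k)) ^ 2 ≤ (∑' k : ℕ, m (n + k)) ^ 2 := by
  intro A hA
  set S : ℕ → ℝ := fun n => ∑' k : ℕ, m (n + k) with hSdef
  have hsum : ∀ n, Summable (fun k => m (n + k)) := by
    intro n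
    simpa [add_comm] using (summable_nat_add_iff n).2 hm_sum
  have hSpos : ∀ n, 0 < S n := fun n =>
    Summable.tsum_pos (hsum n) (fun k => (hm_pos _).le) 0 (hm_pos _)
  have hSanti : ∀ n k, S (n + k) ≤ S n := by
    intro n k
    have h := Summable.sum_add_tsum_nat_add k (hsum n)
    have hnonneg : 0 ≤ ∑ i ∈ Finset.range k, m (n + i) :=
      Finset.sum_nonneg fun i _ => (hm_pos _).le
    have hEq : S (n + k) = ∑' i : ℕ, m (n + (i + k)) := by
      simp only [hSdef]
      congr 1
      funext i
      ring_nf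
    rw [hEq]
    linarith [h]
  -- eventually m n / S n < 1/(2A)
  have hev : ∀ᶠ n in atTop, m n / S n < 1 / (2 * A) :=
    hratio.eventually (gt_mem_nhds (by positivity))
  obtain ⟨n₀, hn₀⟩ := eventually_atTop.1 hev
  refine ⟨n₀, fun n hn => ?_⟩
  have key : ∀ k, m (n + k) ^ 2 ≤ (1 / (2 * A)) * S n * m (n + k) := by
    intro k
    have h1 : m (n + k) / S (n + k) < 1 / (2 * A) := hn₀ (n + k) (le_trans hn (Nat.le_add_right _ _))
    have hSp := hSpos (n + k)
    have h2 : m (n + k) < (1 / (2 * A)) * S (n + k) := by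
      rw [div_lt_iff₀ hSp] at h1; linarith
    have h3 : (1 / (2 * A)) * S (n + k) ≤ (1 / (2 * A)) * S n := by
      have := hSanti n k
      have : S (n + k) ≤ S n := this
      have hpos : (0:ℝ) < 1 / (2 * A) := by positivity
      nlinarith
    nlinarith [(hm_pos (n + k)).le, hm_pos (n + k)]
  have hsq_sum : Summable (fun k => m (n + k) ^ 2) := by
    apply Summable.of_nonneg_of_le (fun k => sq_nonneg _) key
    exact ((hsum n).mul_left _)
  have hts : ∑' k : ℕ, m (n + k) ^ 2 ≤ ∑' k : ℕ, (1 / (2 * A)) * S n * m (n + k) :=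
    Summable.tsum_le_tsum key hsq_sum ((hsum n).mul_left _)
  have hts2 : ∑' k : ℕ, (1 / (2 * A)) * S n * m (n + k) = (1 / (2 * A)) * S n * S n := by
    rw [tsum_mul_left]
  have hfinal : ∑' k : ℕ, m (n + k) ^ 2 ≤ (1 / (2 * A)) * S n * S n := by
    rw [hts2] at hts; exact hts
  have : 2 * A * ∑' k : ℕ, m (n + k) ^ 2 ≤ 2 * A * ((1 / (2 * A)) * S n * S n) := by
    apply mul_le_mul_of_nonneg_left hfinal (by positivity)
  calc 2 * A * ∑' k : ℕ, m (n + k) ^ 2 ≤ 2 * A * ((1 / (2 * A)) * S n * S n) := this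
    _ = S n ^ 2 := by field_simp
end

section
/- Let (m_n) be a positive summable sequence with tail sums S_n = ∑_{k≥n} m_k and m_n/S_n → α ∈ (0,1]. Then there exist n_0, C > 0 and β ∈ (0,1) such that m_{n+k}/S_n ≤ C β^k for all n ≥ n_0 and k ≥ 0. -/
open Filter

theorem geometric_domination_of_tail_terms
    (m : ℕ → ℝ) (α : ℝ) (hα0 : 0 < α) (hα1 : α ≤ 1)
    (hm_pos : ∀ n, 0 < m n) (hm_sum : Summable m)
    (hratio : Tendsto (fun n => m n / ∑' k : ℕ, m (n + k)) atTop (nhds α)) :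
    ∃ n₀ : ℕ, ∃ C > (0:ℝ), ∃ β : ℝ, 0 < β ∧ β < 1 ∧
      ∀ n ≥ n₀, ∀ k : ℕ, m (n + k) / (∑' j : ℕ, m (n + j)) ≤ C * β ^ k := by
  set S : ℕ → ℝ := fun n => ∑' k : ℕ, m (n + k) with hS
  have hsum : ∀ n, Summable (fun k => m (n + k)) := fun n => by
    simpa [add_comm] using (summable_nat_add_iff n).mpr hm_sum
  have hSpos : ∀ n, 0 < S n := fun n =>
    Summable.tsum_pos (hsum n) (fun k => (hm_pos _).le) 0 (hm_pos _)
  have hrec : ∀ n, S n = m n + S (n + 1) := by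
    intro n
    have h0 := Summable.tsum_eq_zero_add (hsum n)
    have h1 : (fun k => m (n + (k + 1))) = fun k => m ((n + 1) + k) := by
      funext k; congr 1; omega
    simpa [h1] using h0
  set β : ℝ := 1 - α / 2 with hβdef
  have hβ0 : 0 < β := by simp only [hβdef]; linarith
  have hβ1 : β < 1 := by simp only [hβdef]; linarith
  have hev : ∀ᶠ n in atTop, α / 2 < m n / S n :=
    hratio.eventually (eventually_gt_nhds (by linarith : α / 2 < α))
  obtain ⟨n₀, hn₀⟩ := eventually_atTop.mp hev
  have hstep : ∀ n ≥ n₀, S (n + 1) ≤ β * S n := by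
    intro n hn
    have h1 : α / 2 < m n / S n := hn₀ n hn
    have h2 : α / 2 * S n < m n := (lt_div_iff₀ (hSpos n)).mp h1
    have h3 : S n = m n + S (n + 1) := hrec n
    show S (n + 1) ≤ (1 - α / 2) * S n
    nlinarith [h2, h3]
  have hgeo : ∀ n ≥ n₀, ∀ k : ℕ, S (n + k) ≤ β ^ k * S n := by
    intro n hn k
    induction k with
    | zero => simp
    | succ k ih =>
      have h1 : S ((n + k) + 1) ≤ β * S (n + k) := hstep (n + k) (le_trans hn (Nat.le_add_right n k))
      have h2 : β * S (n + k) ≤ β * (β ^ k * S n) := by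
        exact mul_le_mul_of_nonneg_left ih hβ0.le
      have h3 : n + (k + 1) = (n + k) + 1 := by omega
      rw [h3]
      calc S ((n + k) + 1) ≤ β * (β ^ k * S n) := le_trans h1 h2
        _ = β ^ (k + 1) * S n := by ring
  refine ⟨n₀, 1, one_pos, β, hβ0, hβ1, ?_⟩
  intro n hn k
  have hm_le : m (n + k) ≤ S (n + k) := by
    have := hrec (n + k)
    have := hSpos (n + k + 1)
    linarith
  have h1 : m (n + k) ≤ β ^ k * S n := le_trans hm_le (hgeo n hn k)
  rw [one_mul]
  exact (div_le_iff₀ (hSpos n)).mpr h1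
end
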